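/- Let B be an n×n matrix with strictly positive entries, Perron eigenvalue β > 0 and right Perron eigenvector μ̄ normalized to be a probability vector. Define J = (1/β)(B - βI - μ̄𝟙ᵀB). Then the eigenvalues of J are exactly {λ_B/β - 1 : λ_B a non-Perron eigenvalue of B} together with the eigenvalue -1 (with eigenvector μ̄). -/

import Mathlib

open Matrix Polynomial

section Helpers

variable {n : ℕ} {K : Type*} [Field K] [DecidableEq K]

lemma JSaux_vecMulVec_mul (u v : Fin n → K) (A : Matrix (Fin n) (Fin n) K) :
    vecMulVec u v * A = vecMulVec u (v ᵥ* A) := by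
  ext i j
  simp [mul_apply, vecMulVec_apply, vecMul, dotProduct, Finset.mul_sum, mul_assoc]

lemma JSaux_mul_vecMulVec (A : Matrix (Fin n) (Fin n) K) (u v : Fin n → K) :
    A * vecMulVec u v = vecMulVec (A.mulVec u) v := by
  ext i j
  simp [mul_apply, vecMulVec_apply, mulVec, dotProduct, Finset.sum_mul, mul_assoc]

lemma JSaux_vecMulVec_mulVec (u v x : Fin n → K) :
    vecMulVec u v *ᵥ x = (v ⬝ᵥ x) • u := by
  funext i
  simp [vecMulVec_apply, mulVec, dotProduct, Finset.sum_mul, Finset.mul_sum, mul_assoc,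
    mul_comm, mul_left_comm]

lemma JSaux_det_one_add_vecMulVec (u v : Fin n → K) :
    (1 + vecMulVec u v).det = 1 + v ⬝ᵥ u := by
  rw [vecMulVec_eq (Fin 1), Matrix.det_one_add_replicateCol_mul_replicateRow]

lemma JSaux_memSpec (A : Matrix (Fin n) (Fin n) K) (z : K) :
    z ∈ spectrum K A ↔ (z • (1 : Matrix (Fin n) (Fin n) K) - A).det = 0 := by
  rw [spectrum.mem_iff, Matrix.isUnit_iff_isUnit_det, isUnit_iff_ne_zero, not_not,
    Algebra.algebraMap_eq_smul_one]

lemma JSaux_eval_charpoly (M : Matrix (Fin n) (Fin n) ℂ) (t : ℂ) :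
    M.charpoly.eval t = (t • (1 : Matrix (Fin n) (Fin n) ℂ) - M).det := by
  rw [Matrix.charpoly, _root_.eval_det, matPolyEquiv_charmatrix]
  congr 1
  ext i j
  simp [scalar_apply, Matrix.smul_apply, one_apply, diagonal_apply]

lemma JSaux_key_unit (Bc : Matrix (Fin n) (Fin n) ℂ) (μc w : Fin n → ℂ) (β z : ℂ)
    (hμ : Bc.mulVec μc = β • μc) (hw : w ⬝ᵥ μc = β) (hμne : μc ≠ 0)
    (hdet : (z • (1 : Matrix (Fin n) (Fin n) ℂ) - Bc).det ≠ 0) :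
    (z - β) * (z • (1 : Matrix (Fin n) (Fin n) ℂ) - (Bc - vecMulVec μc w)).det
      = z * (z • (1 : Matrix (Fin n) (Fin n) ℂ) - Bc).det := by
  set A := z • (1 : Matrix (Fin n) (Fin n) ℂ) - Bc with hA
  have hAμ : A.mulVec μc = (z - β) • μc := by
    rw [hA, sub_mulVec, hμ, smul_mulVec, one_mulVec, sub_smul]
  have hz : z ≠ β := by
    intro h
    apply hdet
    rw [← Matrix.exists_mulVec_eq_zero_iff]
    exact ⟨μc, hμne, by rw [hAμ, h, sub_self, zero_smul]⟩
  have hsub : z • (1 : Matrix (Fin n) (Fin n) ℂ) - (Bc - vecMulVec μc w)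
      = A * (1 + vecMulVec ((z - β)⁻¹ • μc) w) := by
    rw [Matrix.mul_add, Matrix.mul_one, JSaux_mul_vecMulVec, Matrix.mulVec_smul, hAμ,
      smul_smul, inv_mul_cancel₀ (sub_ne_zero.mpr hz), one_smul, hA]
    abel
  rw [hsub, det_mul, JSaux_det_one_add_vecMulVec, dotProduct_smul, hw]
  field_simp [sub_ne_zero.mpr hz]
  ring_nf
  field_simp [sub_ne_zero.mpr hz]
  ring

lemma JSaux_key_all (Bc : Matrix (Fin n) (Fin n) ℂ) (μc w : Fin n → ℂ) (β : ℂ)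
    (hμ : Bc.mulVec μc = β • μc) (hw : w ⬝ᵥ μc = β) (hμne : μc ≠ 0) (z : ℂ) :
    (z - β) * (z • (1 : Matrix (Fin n) (Fin n) ℂ) - (Bc - vecMulVec μc w)).det
      = z * (z • (1 : Matrix (Fin n) (Fin n) ℂ) - Bc).det := by
  set p := (X - C β) * (Bc - vecMulVec μc w).charpoly with hp
  set q := X * Bc.charpoly with hq
  have hpq : p = q := by
    apply eq_of_infinite_eval_eq
    apply Set.Infinite.mono _ ((finite_setOf_isRoot
      (Bc.charpoly_monic.ne_zero)).infinite_compl)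
    intro x hx
    simp only [Set.mem_compl_iff, Set.mem_setOf_eq, IsRoot.def] at hx
    have hdet : (x • (1 : Matrix (Fin n) (Fin n) ℂ) - Bc).det ≠ 0 := by
      rwa [← JSaux_eval_charpoly]
    simp only [Set.mem_setOf_eq, hp, hq, eval_mul, eval_sub, eval_X, eval_C,
      JSaux_eval_charpoly]
    exact JSaux_key_unit Bc μc w β x hμ hw hμne hdet
  have := congrArg (eval z) hpq
  simpa only [hp, hq, eval_mul, eval_sub, eval_X, eval_C, JSaux_eval_charpoly] using this

lemma JSaux_mulVec_map (B : Matrix (Fin n) (Fin n) ℝ) (x : Fin n → ℝ) :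
    (B.map Complex.ofReal) *ᵥ (fun i => (x i : ℂ)) = fun j => (((B *ᵥ x) j : ℝ) : ℂ) := by
  funext j
  simp [mulVec, dotProduct, Matrix.map_apply]

lemma JSaux_vecMul_map (B : Matrix (Fin n) (Fin n) ℝ) (x : Fin n → ℝ) :
    (fun i => (x i : ℂ)) ᵥ* (B.map Complex.ofReal) = fun j => (((x ᵥ* B) j : ℝ) : ℂ) := by
  funext j
  simp [vecMul, dotProduct, Matrix.map_apply]

/-- Existence of a nonnegative left eigenvector pairing positively with `μbar`. -/
lemma JSaux_left_eig {n : ℕ} (B : Matrix (Fin n) (Fin n) ℝ)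
    (hBpos : ∀ i j, 0 < B i j) (β : ℝ) (hβpos : 0 < β)
    (hdet : (β • (1 : Matrix (Fin n) (Fin n) ℝ) - B).det = 0)
    (μbar : Fin n → ℝ) (hμpos : ∀ i, 0 < μbar i)
    (hμeig : B.mulVec μbar = β • μbar) :
    ∃ ν : Fin n → ℝ, ν ᵥ* B = β • ν ∧ 0 < ν ⬝ᵥ μbar := by
  have hdetT : ((β • (1 : Matrix (Fin n) (Fin n) ℝ) - B)ᵀ).det = 0 := by
    rw [det_transpose]; exact hdet
  obtain ⟨v, hv0, hker⟩ := (Matrix.exists_mulVec_eq_zero_iff).mpr hdetT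
  have hvB : v ᵥ* B = β • v := by
    have ht : (β • (1 : Matrix (Fin n) (Fin n) ℝ) - B)ᵀ
        = β • (1 : Matrix (Fin n) (Fin n) ℝ) - Bᵀ := by
      rw [transpose_sub, transpose_smul, transpose_one]
    rw [ht, sub_mulVec, smul_mulVec, one_mulVec, sub_eq_zero] at hker
    rw [← Matrix.mulVec_transpose, ← hker]
  set ν : Fin n → ℝ := fun i => |v i| with hν
  have hle : ∀ j, β * ν j ≤ (ν ᵥ* B) j := by
    intro j
    have h1 : (v ᵥ* B) j = β * v j := by rw [hvB]; simp
    calc β * ν j = |β * v j| := by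
          rw [abs_mul, abs_of_pos hβpos]
      _ = |(v ᵥ* B) j| := by rw [h1]
      _ = |∑ i, v i * B i j| := by simp [vecMul, dotProduct]
      _ ≤ ∑ i, |v i * B i j| := Finset.abs_sum_le_sum_abs _ _
      _ = ∑ i, ν i * B i j := by
          refine Finset.sum_congr rfl fun i _ => ?_
          rw [abs_mul, abs_of_pos (hBpos i j)]
      _ = (ν ᵥ* B) j := by simp [vecMul, dotProduct]
  have hsum0 : ∑ j, ((ν ᵥ* B) j - β * ν j) * μbar j = 0 := by
    have h2 : (ν ᵥ* B) ⬝ᵥ μbar = β * (ν ⬝ᵥ μbar) := by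
      rw [← Matrix.dotProduct_mulVec, hμeig, dotProduct_smul, smul_eq_mul]
    have : ∑ j, ((ν ᵥ* B) j - β * ν j) * μbar j
        = (ν ᵥ* B) ⬝ᵥ μbar - β * (ν ⬝ᵥ μbar) := by
      simp [dotProduct, sub_mul, Finset.sum_sub_distrib, Finset.mul_sum, mul_assoc]
    rw [this, h2, sub_self]
  have heach : ∀ j, (ν ᵥ* B) j = β * ν j := by
    have hterm := (Finset.sum_eq_zero_iff_of_nonneg (fun j _ =>
      mul_nonneg (sub_nonneg.mpr (hle j)) (hμpos j).le)).mp hsum0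
    intro j
    have := hterm j (Finset.mem_univ j)
    rcases mul_eq_zero.mp this with h | h
    · linarith [sub_eq_zero.mp h]
    · exact absurd h (hμpos j).ne'
  refine ⟨ν, funext fun j => by rw [heach j]; simp, ?_⟩
  obtain ⟨i, hi⟩ := Function.ne_iff.mp hv0
  refine Finset.sum_pos' (fun j _ => mul_nonneg (abs_nonneg _) (hμpos j).le)
    ⟨i, Finset.mem_univ i, mul_pos (abs_pos.mpr hi) (hμpos i)⟩

end Helpers

/-- the spectrum of `J = (1/β)(B - βI - μ̄𝟙ᵀB)` consists of `-1`
(with eigenvector `μ̄`) together with `λ_B/β - 1` for the non-Perron eigenvalues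
`λ_B` of `B`. -/
theorem J_spectrum {n : ℕ} (B : Matrix (Fin n) (Fin n) ℝ)
    (hBpos : ∀ i j, 0 < B i j)
    (β : ℝ) (hβpos : 0 < β) (hβmem : β ∈ spectrum ℝ B)
    (hβmax : ∀ z ∈ spectrum ℂ (B.map (Complex.ofReal)), ‖z‖ ≤ β)
    (μbar : Fin n → ℝ) (hμpos : ∀ i, 0 < μbar i) (hμsum : (∑ i, μbar i) = 1)
    (hμeig : B.mulVec μbar = β • μbar)
    (hsimple : ∀ v : Fin n → ℝ, B.mulVec v = β • v → ∃ c : ℝ, v = c • μbar) :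
    (spectrum ℂ ((β⁻¹ • (B - β • (1 : Matrix (Fin n) (Fin n) ℝ) -
        Matrix.vecMulVec μbar (fun _ => 1) * B)).map (Complex.ofReal)) =
      {w : ℂ | ∃ z ∈ spectrum ℂ (B.map (Complex.ofReal)),
          z ≠ (β : ℂ) ∧ w = z / (β : ℂ) - 1} ∪ {-1}) ∧
    (β⁻¹ • (B - β • (1 : Matrix (Fin n) (Fin n) ℝ) -
        Matrix.vecMulVec μbar (fun _ => 1) * B)).mulVec μbar = (-1 : ℝ) • μbar := by
  have hn : Nonempty (Fin n) := by
    rcases n with _ | m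
    · simp at hμsum
    · exact ⟨0⟩
  have hβ0 : (β : ℂ) ≠ 0 := by exact_mod_cast hβpos.ne'
  set Jr := β⁻¹ • (B - β • (1 : Matrix (Fin n) (Fin n) ℝ) -
      Matrix.vecMulVec μbar (fun _ => 1) * B) with hJr
  set Bc := B.map Complex.ofReal with hBc
  set μc : Fin n → ℂ := fun i => (μbar i : ℂ) with hμc
  set wc : Fin n → ℂ := (fun _ => (1:ℂ)) ᵥ* Bc with hwc
  set Mc := Bc - vecMulVec μc wc with hMc
  have hμceig : Bc *ᵥ μc = (β:ℂ) • μc := by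
    rw [hBc, hμc, JSaux_mulVec_map, hμeig]
    funext j
    push_cast
    simp
  have hμsumc : (∑ i, μc i) = 1 := by
    rw [hμc, ← Complex.ofReal_sum, hμsum, Complex.ofReal_one]
  have hones : (fun _ => (1:ℂ)) ⬝ᵥ μc = 1 := by
    simpa [dotProduct] using hμsumc
  have hwμ : wc ⬝ᵥ μc = (β:ℂ) := by
    rw [hwc, ← Matrix.dotProduct_mulVec, hμceig, dotProduct_smul, hones, smul_eq_mul, mul_one]
  have hμcne : μc ≠ 0 := by
    obtain ⟨i⟩ := hn
    intro h
    have h2 : (μbar i : ℂ) = 0 := congrFun h i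
    exact (hμpos i).ne' (by exact_mod_cast h2)
  have hMμ : Mc *ᵥ μc = 0 := by
    rw [hMc, sub_mulVec, JSaux_vecMulVec_mulVec, hwμ, hμceig, sub_self]
  have hβdet : (β • (1 : Matrix (Fin n) (Fin n) ℝ) - B).det = 0 :=
    (JSaux_memSpec B β).mp hβmem
  obtain ⟨ν, hνB, hνμ⟩ := JSaux_left_eig B hBpos β hβpos hβdet μbar hμpos hμeig
  set νc : Fin n → ℂ := fun i => (ν i : ℂ) with hνc
  have hνcB : νc ᵥ* Bc = (β:ℂ) • νc := by
    rw [hνc, hBc, JSaux_vecMul_map, hνB]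
    funext j
    push_cast
    simp
  have hνcμ0 : νc ⬝ᵥ μc ≠ 0 := by
    have : νc ⬝ᵥ μc = ((ν ⬝ᵥ μbar : ℝ) : ℂ) := by
      simp [hνc, hμc, dotProduct]
    rw [this]
    exact_mod_cast hνμ.ne'
  -- β is not an eigenvalue of Mc
  have hβnot : (((β:ℂ)) • (1 : Matrix (Fin n) (Fin n) ℂ) - Mc).det ≠ 0 := by
    intro h
    obtain ⟨v, hv0, hker⟩ := (Matrix.exists_mulVec_eq_zero_iff).mpr h
    have hMv : Mc *ᵥ v = (β:ℂ) • v := by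
      rw [sub_mulVec, smul_mulVec, one_mulVec, sub_eq_zero] at hker
      exact hker.symm
    set c := wc ⬝ᵥ v with hc
    have hBv' : Bc *ᵥ v - c • μc = (β:ℂ) • v := by
      rw [hMc, sub_mulVec, JSaux_vecMulVec_mulVec] at hMv
      exact hMv
    have hc0 : c = 0 := by
      have h1 : νc ⬝ᵥ (Bc *ᵥ v) = (β:ℂ) * (νc ⬝ᵥ v) := by
        rw [Matrix.dotProduct_mulVec, hνcB, smul_dotProduct, smul_eq_mul]
      have h2 := congrArg (fun x => νc ⬝ᵥ x) hBv'
      simp only [dotProduct_sub, dotProduct_smul, smul_eq_mul, h1] at h2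
      have h3 : c * (νc ⬝ᵥ μc) = 0 := by linear_combination -h2
      exact (mul_eq_zero.mp h3).resolve_right hνcμ0
    have hBv : Bc *ᵥ v = (β:ℂ) • v := by
      rw [← hBv', hc0, zero_smul, sub_zero]
    have hre : B *ᵥ (fun i => (v i).re) = β • (fun i => (v i).re) := by
      funext j
      have h4 := congrArg Complex.re (congrFun hBv j)
      simpa [mulVec, dotProduct, Matrix.map_apply, hBc, Complex.re_sum,
        Complex.re_ofReal_mul] using h4
    have him : B *ᵥ (fun i => (v i).im) = β • (fun i => (v i).im) := by
      funext j
      have h4 := congrArg Complex.im (congrFun hBv j)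
      simpa [mulVec, dotProduct, Matrix.map_apply, hBc, Complex.im_sum,
        Complex.im_ofReal_mul] using h4
    obtain ⟨c₁, hc₁⟩ := hsimple _ hre
    obtain ⟨c₂, hc₂⟩ := hsimple _ him
    have hv : v = ((c₁ : ℂ) + (c₂ : ℂ) * Complex.I) • μc := by
      funext i
      have h5 : (v i).re = c₁ * μbar i := by
        have := congrFun hc₁ i
        simpa using this
      have h6 : (v i).im = c₂ * μbar i := by
        have := congrFun hc₂ i
        simpa using this
      rw [← Complex.re_add_im (v i), h5, h6]
      simp [hμc]
      push_cast
      ring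
    have h7 : c = ((c₁ : ℂ) + (c₂ : ℂ) * Complex.I) * (β:ℂ) := by
      rw [hc, hv, dotProduct_smul, hwμ, smul_eq_mul]
    have h8 : ((c₁ : ℂ) + (c₂ : ℂ) * Complex.I) = 0 := by
      rcases mul_eq_zero.mp (h7 ▸ hc0) with h | h
      · exact h
      · exact absurd h hβ0
    exact hv0 (by rw [hv, h8, zero_smul])
  have H := fun z => JSaux_key_all Bc μc wc β hμceig hwμ hμcne z
  have specM : ∀ s : ℂ, (s • (1 : Matrix (Fin n) (Fin n) ℂ) - Mc).det = 0 ↔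
      s = 0 ∨ ((s • (1 : Matrix (Fin n) (Fin n) ℂ) - Bc).det = 0 ∧ s ≠ (β:ℂ)) := by
    intro s
    constructor
    · intro hs
      by_cases h0 : s = 0
      · exact Or.inl h0
      · refine Or.inr ⟨?_, ?_⟩
        · have h1 := H s
          rw [← hMc] at h1
          rw [hs, mul_zero] at h1
          exact ((mul_eq_zero.mp h1.symm).resolve_left h0)
        · rintro rfl
          exact hβnot hs
    · rintro (rfl | ⟨hdB, hsβ⟩)
      · rw [← Matrix.exists_mulVec_eq_zero_iff]
        refine ⟨μc, hμcne, ?_⟩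
        rw [sub_mulVec, hMμ, zero_smul, zero_mulVec, sub_zero]
      · have h1 := H s
        rw [← hMc] at h1
        rw [hdB, mul_zero] at h1
        exact (mul_eq_zero.mp h1).resolve_left (sub_ne_zero.mpr hsβ)
  -- the complexified J
  have h1r : vecMulVec μbar (fun _ => (1:ℝ)) * B
      = vecMulVec μbar ((fun _ => (1:ℝ)) ᵥ* B) := JSaux_vecMulVec_mul _ _ _
  have hwcr : wc = fun j => ((((fun _ => (1:ℝ)) ᵥ* B) j : ℝ) : ℂ) := by
    rw [hwc, hBc]
    simpa using JSaux_vecMul_map B (fun _ => 1)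
  have hJc : Jr.map Complex.ofReal = ((β:ℂ))⁻¹ • (Mc - (β:ℂ) • 1) := by
    ext i j
    simp only [hJr, h1r, hMc, hBc, hμc, hwcr, Matrix.map_apply, Matrix.smul_apply,
      Matrix.sub_apply, vecMulVec_apply, Matrix.one_apply, smul_eq_mul]
    split_ifs <;> push_cast <;> ring
  have hosmul : ∀ w : ℂ, w • (1 : Matrix (Fin n) (Fin n) ℂ) - Jr.map Complex.ofReal
      = ((β:ℂ))⁻¹ • (((β:ℂ) * (w + 1)) • 1 - Mc) := by
    intro w
    have e1 : ((β:ℂ))⁻¹ * ((β:ℂ) * (w + 1)) = w + 1 := by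
      field_simp
    rw [smul_sub, smul_smul, e1, hJc, smul_sub, smul_smul,
      inv_mul_cancel₀ hβ0, one_smul, add_smul, one_smul]
    abel
  have hdetJ : ∀ w : ℂ, (w • (1 : Matrix (Fin n) (Fin n) ℂ) - Jr.map Complex.ofReal).det = 0
      ↔ (((β:ℂ) * (w + 1)) • (1 : Matrix (Fin n) (Fin n) ℂ) - Mc).det = 0 := by
    intro w
    rw [hosmul w, det_smul, mul_eq_zero]
    simp [hβ0, pow_eq_zero_iff]
  constructor
  · ext w
    simp only [Set.mem_union, Set.mem_setOf_eq, Set.mem_singleton_iff]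
    rw [JSaux_memSpec, hdetJ w, specM]
    constructor
    · rintro (h0 | ⟨hdB, hsβ⟩)
      · right
        rcases mul_eq_zero.mp h0 with h | h
        · exact absurd h hβ0
        · exact eq_neg_of_add_eq_zero_left h
      · left
        refine ⟨(β:ℂ) * (w + 1), (JSaux_memSpec Bc _).mpr hdB, hsβ, ?_⟩
        field_simp
        ring
    · rintro (⟨z, hz, hzβ, hw⟩ | rfl)
      · right
        have hz' : (β:ℂ) * (w + 1) = z := by
          rw [hw]
          field_simp
          ring
        rw [hz']
        exact ⟨(JSaux_memSpec Bc z).mp hz, hzβ⟩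
      · left
        ring_nf
  · have h1 : vecMulVec μbar (fun _ => (1:ℝ)) * B
        = vecMulVec μbar ((fun _ => (1:ℝ)) ᵥ* B) := JSaux_vecMulVec_mul _ _ _
    have h1B : ((fun _ => (1:ℝ)) ᵥ* B) ⬝ᵥ μbar = β := by
      rw [← Matrix.dotProduct_mulVec, hμeig, dotProduct_smul, smul_eq_mul]
      simp [dotProduct, hμsum]
    rw [hJr, smul_mulVec, sub_mulVec, sub_mulVec, hμeig, smul_mulVec,
      one_mulVec, h1, JSaux_vecMulVec_mulVec, h1B, sub_self, zero_sub, smul_neg,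
      smul_smul, inv_mul_cancel₀ hβpos.ne', one_smul, neg_one_smul]
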